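/- Let u, u* ∈ ℝⁿ and v, v* ∈ ℝᵐ (Euclidean spaces) satisfy ⟨u*,u⟩ = ⟨v*,v⟩ and ‖u‖₂ = ‖v*‖₂ = 1, and set B̄ := v* u*ᵀ + v uᵀ − ⟨u*,u⟩ v* uᵀ. Then B̄ is the unique minimizer of ½‖B‖_F² over all m×n matrices B satisfying B u = v and Bᵀ v* = u*; that is, every m×n matrix B with B u = v and Bᵀ v* = u* satisfies ‖B‖_F ≥ ‖B̄‖_F, with equality only if B = B̄. -/

import Mathlib

open Matrix

noncomputable section

/-- The Euclidean norm on `Fin k → ℝ`. -/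
def euclN {k : ℕ} (x : Fin k → ℝ) : ℝ := Real.sqrt (x ⬝ᵥ x)

/-- The Frobenius norm of a real matrix. -/
def frobNorm {m n : ℕ} (B : Matrix (Fin m) (Fin n) ℝ) : ℝ :=
  Real.sqrt (∑ i, ∑ j, (B i j) ^ 2)

/-- The matrix `B̄ := v* u*ᵀ + v uᵀ − ⟨u*,u⟩ v* uᵀ`. -/
def Bbar {m n : ℕ} (u us : Fin n → ℝ) (v vs : Fin m → ℝ) : Matrix (Fin m) (Fin n) ℝ :=
  Matrix.vecMulVec vs us + Matrix.vecMulVec v u - (us ⬝ᵥ u) • Matrix.vecMulVec vs u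

/-- `B̄` is the unique minimizer of `½‖B‖_F²` subject to `Bu = v`
and `Bᵀv* = u*`: any feasible `B` satisfies `‖B‖_F ≥ ‖B̄‖_F`, with equality only
if `B = B̄`. -/
theorem statement13 {m n : ℕ} (u us : Fin n → ℝ) (v vs : Fin m → ℝ)
    (hc : us ⬝ᵥ u = vs ⬝ᵥ v) (hu : euclN u = 1) (hvs : euclN vs = 1)
    (B : Matrix (Fin m) (Fin n) ℝ)
    (hBu : B.mulVec u = v) (hBt : B.transpose.mulVec vs = us) :
    frobNorm (Bbar u us v vs) ≤ frobNorm B ∧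
    (frobNorm B = frobNorm (Bbar u us v vs) → B = Bbar u us v vs) := by
  have hu2 : u ⬝ᵥ u = 1 := by
    have := hu
    unfold euclN at this
    exact Real.sqrt_eq_one.mp this
  have hvs2 : vs ⬝ᵥ vs = 1 := Real.sqrt_eq_one.mp hvs
  set c : ℝ := us ⬝ᵥ u with hcdef
  set Bb := Bbar u us v vs with hBb
  have hBbe : ∀ i j, Bb i j = vs i * us j + v i * u j - c * (vs i * u j) := by
    intro i j
    simp [hBb, Bbar, vecMulVec_apply, Matrix.add_apply, Matrix.sub_apply, Matrix.smul_apply]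
    exact Or.inl hcdef.symm
  -- D := B - Bb
  set D := B - Bb with hD
  have hDu : ∀ i, ∑ j, D i j * u j = 0 := by
    intro i
    have h1 : ∑ j, B i j * u j = v i := congrFun hBu i
    have h2 : ∑ j, Bb i j * u j = v i := by
      simp only [hBbe]
      have : ∑ j, (vs i * us j + v i * u j - c * (vs i * u j)) * u j
          = vs i * (∑ j, us j * u j) + v i * (∑ j, u j * u j)
            - c * (vs i * (∑ j, u j * u j)) := by
        rw [Finset.mul_sum, Finset.mul_sum, Finset.mul_sum, Finset.mul_sum,
          ← Finset.sum_add_distrib, ← Finset.sum_sub_distrib]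
        exact Finset.sum_congr rfl fun j _ => by ring
      rw [this]
      have hus : (∑ j, us j * u j) = c := rfl
      have huu : (∑ j, u j * u j) = 1 := hu2
      rw [hus, huu]; ring
    simp only [hD, Matrix.sub_apply, sub_mul, Finset.sum_sub_distrib, h1, h2, sub_self]
  have hDvs : ∀ j, ∑ i, D i j * vs i = 0 := by
    intro j
    have h1 : ∑ i, B i j * vs i = us j := by
      have := congrFun hBt j
      simpa [Matrix.mulVec, dotProduct, Matrix.transpose_apply, mul_comm] using this
    have h2 : ∑ i, Bb i j * vs i = us j := by
      simp only [hBbe]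
      have : ∑ i, (vs i * us j + v i * u j - c * (vs i * u j)) * vs i
          = us j * (∑ i, vs i * vs i) + u j * (∑ i, v i * vs i)
            - c * (u j * (∑ i, vs i * vs i)) := by
        rw [Finset.mul_sum, Finset.mul_sum, Finset.mul_sum, Finset.mul_sum,
          ← Finset.sum_add_distrib, ← Finset.sum_sub_distrib]
        exact Finset.sum_congr rfl fun i _ => by ring
      rw [this]
      have hvv : (∑ i, vs i * vs i) = 1 := hvs2
      have hvvs : (∑ i, v i * vs i) = c := by
        rw [hc]; simp [dotProduct, mul_comm]
      rw [hvv, hvvs]; ring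
    simp only [hD, Matrix.sub_apply, sub_mul, Finset.sum_sub_distrib, h1, h2, sub_self]
  -- orthogonality
  have horth : ∑ i, ∑ j, Bb i j * D i j = 0 := by
    have hsplit : ∑ i, ∑ j, Bb i j * D i j
        = (∑ i, ∑ j, vs i * us j * D i j) + (∑ i, v i * ∑ j, D i j * u j)
          - c * ∑ i, vs i * ∑ j, D i j * u j := by
      rw [Finset.mul_sum, ← Finset.sum_add_distrib, ← Finset.sum_sub_distrib]
      refine Finset.sum_congr rfl fun i _ => ?_
      rw [Finset.mul_sum, Finset.mul_sum, Finset.mul_sum,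
        ← Finset.sum_add_distrib, ← Finset.sum_sub_distrib]
      refine Finset.sum_congr rfl fun j _ => ?_
      rw [hBbe]; ring
    rw [hsplit]
    have h1 : (∑ i, ∑ j, vs i * us j * D i j) = 0 := by
      rw [Finset.sum_comm]
      refine Finset.sum_eq_zero fun j _ => ?_
      have : ∑ i, vs i * us j * D i j = us j * ∑ i, D i j * vs i := by
        rw [Finset.mul_sum]; exact Finset.sum_congr rfl fun i _ => by ring
      rw [this, hDvs, mul_zero]
    simp [h1, hDu]
  -- Pythagoras
  have hS : ∑ i, ∑ j, B i j ^ 2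
      = (∑ i, ∑ j, Bb i j ^ 2) + (∑ i, ∑ j, D i j ^ 2) := by
    have hB : ∀ i j, B i j = Bb i j + D i j := by
      intro i j; simp [hD]
    have : ∑ i, ∑ j, B i j ^ 2
        = (∑ i, ∑ j, Bb i j ^ 2) + 2 * (∑ i, ∑ j, Bb i j * D i j)
          + (∑ i, ∑ j, D i j ^ 2) := by
      rw [Finset.mul_sum, ← Finset.sum_add_distrib, ← Finset.sum_add_distrib]
      refine Finset.sum_congr rfl fun i _ => ?_
      rw [Finset.mul_sum, ← Finset.sum_add_distrib, ← Finset.sum_add_distrib]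
      refine Finset.sum_congr rfl fun j _ => ?_
      rw [hB]; ring
    rw [this, horth]; ring
  have hDnn : 0 ≤ ∑ i, ∑ j, D i j ^ 2 :=
    Finset.sum_nonneg fun i _ => Finset.sum_nonneg fun j _ => sq_nonneg _
  have hBbnn : 0 ≤ ∑ i, ∑ j, Bb i j ^ 2 :=
    Finset.sum_nonneg fun i _ => Finset.sum_nonneg fun j _ => sq_nonneg _
  constructor
  · unfold frobNorm
    apply Real.sqrt_le_sqrt
    rw [hS]; linarith
  · intro heq
    unfold frobNorm at heq
    have hBnn : 0 ≤ ∑ i, ∑ j, B i j ^ 2 := by rw [hS]; linarith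
    have hSeq : ∑ i, ∑ j, B i j ^ 2 = ∑ i, ∑ j, Bb i j ^ 2 := by
      have := congrArg (· ^ 2) heq
      simpa [Real.sq_sqrt hBnn, Real.sq_sqrt hBbnn] using this
    have hD0 : ∑ i, ∑ j, D i j ^ 2 = 0 := by rw [hS] at hSeq; linarith
    have : ∀ i, ∀ j, D i j = 0 := by
      intro i j
      have h1 : ∀ i ∈ Finset.univ, (0:ℝ) ≤ ∑ j, D i j ^ 2 :=
        fun i _ => Finset.sum_nonneg fun j _ => sq_nonneg _
      have h2 := (Finset.sum_eq_zero_iff_of_nonneg h1).mp hD0 i (Finset.mem_univ i)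
      have h3 := (Finset.sum_eq_zero_iff_of_nonneg
        (fun j _ => sq_nonneg (D i j))).mp h2 j (Finset.mem_univ j)
      exact pow_eq_zero_iff (by norm_num) |>.mp h3
    ext i j
    have := this i j
    simp only [hD, Matrix.sub_apply] at this
    linarith

end
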